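/- (Bound on the Shapley value after replication.) Let N be a finite set with |N| = M ≥ 1, let i ∈ N, let i' ∉ N, and set N^R = N ∪ {i'}. Let v : Finset N^R → ℝ be supermodular, with v(N) > 0 and v(N^R) > 0, and let a_i ∈ ℝ be such that for every S ⊆ N^R \ {i} with i' ∈ S, v(S ∪ {i}) − v(S) ≤ a_i. Let φ(i) = (1/v(N)) · Σ_{S ⊆ N \ {i}} (|S|!(M−|S|−1)!/M!) · (v(S ∪ {i}) − v(S)) be the normalized Shapley value of i in the original market N, and let φ^R(i) = (1/v(N^R)) · Σ_{S ⊆ N^R \ {i}} (|S|!(M−|S|)!/(M+1)!) · (v(S ∪ {i}) − v(S)) be the normalized Shapley value of i in the replicated market N^R. Then φ^R(i) ≤ (φ(i) · v(N) + a_i) / (2 · v(N^R)). -/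

import Mathlib

open Finset

/-- The normalized Shapley value of party `i` for the characteristic function `v`
in the market `market` with `m = |market|` parties:
`φ(v,i) = (1/v(market)) · Σ_{S ⊆ market \ {i}} (|S|!(m−|S|−1)!/m!) · (v(S∪{i}) − v(S))`. -/
noncomputable def shapley {ι : Type*} [DecidableEq ι] (market : Finset ι)
    (v : Finset ι → ℝ) (i : ι) : ℝ :=
  (1 / v market) * ∑ S ∈ (market.erase i).powerset,
    (S.card.factorial * (market.card - S.card - 1).factorial : ℝ)
      / (market.card.factorial : ℝ) * (v (insert i S) - v S)

private lemma sum_pair_reindex {ι : Type*} [DecidableEq ι] (A : Finset ι) (f : Finset ι → ι → ℝ) :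
    ∑ T ∈ A.powerset, ∑ x ∈ A \ T, f T x
      = ∑ U ∈ A.powerset, ∑ x ∈ U, f (U.erase x) x := by
  rw [Finset.sum_sigma', Finset.sum_sigma']
  refine Finset.sum_nbij' (fun p => ⟨insert p.2 p.1, p.2⟩)
    (fun p => ⟨p.1.erase p.2, p.2⟩) ?_ ?_ ?_ ?_ ?_
  · rintro ⟨T, x⟩ hp
    simp only [mem_sigma, mem_powerset, mem_sdiff] at hp ⊢
    exact ⟨insert_subset hp.2.1 hp.1, mem_insert_self _ _⟩
  · rintro ⟨U, x⟩ hp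
    simp only [mem_sigma, mem_powerset, mem_sdiff] at hp ⊢
    exact ⟨(erase_subset _ _).trans hp.1, hp.1 hp.2, notMem_erase _ _⟩
  · rintro ⟨T, x⟩ hp
    simp only [mem_sigma, mem_powerset, mem_sdiff] at hp
    simp [erase_insert hp.2.2]
  · rintro ⟨U, x⟩ hp
    simp only [mem_sigma, mem_powerset] at hp
    simp [insert_erase hp.2]
  · rintro ⟨T, x⟩ hp
    simp only [mem_sigma, mem_powerset, mem_sdiff] at hp
    simp [erase_insert hp.2.2]

private lemma coeff_eq (n u : ℕ) (hu : u ≤ n) :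
    (u : ℝ) * ((((u - 1) + 1).factorial : ℝ) * ((n - (u - 1)).factorial : ℝ) / ((n + 1).factorial : ℝ))
      - ((n - u : ℕ) : ℝ) * (((u + 1).factorial : ℝ) * ((n - u).factorial : ℝ) / ((n + 1).factorial : ℝ))
    = ((u.factorial : ℝ) * ((n - u).factorial : ℝ)) / ((n + 1).factorial : ℝ) * (2 * u - (n : ℝ)) := by
  obtain ⟨k, rfl⟩ : ∃ k, n = u + k := ⟨n - u, by omega⟩
  have hf : (0:ℝ) < ((u + k + 1).factorial : ℝ) := by positivity
  rcases u with _ | u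
  · have h1 : 0 + k - 0 = k := by omega
    have h2 : 0 + k - (0 - 1) = k := by omega
    simp only [Nat.zero_sub, Nat.zero_add, Nat.sub_zero]
    have e3 : ((k + 1).factorial : ℝ) = (k + 1) * k.factorial := by
      rw [Nat.factorial_succ]; push_cast; ring
    push_cast [e3]
    field_simp
    ring
  · have h1 : (u + 1) - 1 = u := by omega
    have h2 : (u + 1 + k) - u = k + 1 := by omega
    have h3 : (u + 1 + k) - (u + 1) = k := by omega
    rw [h1, h2, h3]
    have e1 : ((u + 1).factorial : ℝ) = (u + 1) * u.factorial := by
      rw [Nat.factorial_succ]; push_cast; ring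
    have e2 : ((u + 2).factorial : ℝ) = (u + 2) * (u + 1) * u.factorial := by
      rw [Nat.factorial_succ, Nat.factorial_succ]; push_cast; ring
    have e3 : ((k + 1).factorial : ℝ) = (k + 1) * k.factorial := by
      rw [Nat.factorial_succ]; push_cast; ring
    have hu1 : u + 1 + 1 = u + 2 := by omega
    rw [hu1, e1, e2, e3]
    push_cast
    field_simp
    ring

private lemma key_ineq {ι : Type*} [DecidableEq ι] (A : Finset ι) (Δ : Finset ι → ℝ)
    (hmono : ∀ T ∈ A.powerset, ∀ x ∈ A \ T, Δ T ≤ Δ (insert x T)) :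
    0 ≤ ∑ T ∈ A.powerset,
      ((T.card.factorial : ℝ) * ((A.card - T.card).factorial : ℝ)) / ((A.card + 1).factorial : ℝ)
        * (2 * T.card - (A.card : ℝ)) * Δ T := by
  set n := A.card with hn
  set lam : ℕ → ℝ :=
    fun t => ((t + 1).factorial : ℝ) * ((n - t).factorial : ℝ) / ((n + 1).factorial : ℝ)
    with hlam
  have h0 : 0 ≤ ∑ T ∈ A.powerset, ∑ x ∈ A \ T, lam T.card * (Δ (insert x T) - Δ T) := by
    refine Finset.sum_nonneg fun T hT => Finset.sum_nonneg fun x hx =>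
      mul_nonneg ?_ (sub_nonneg.2 (hmono T hT x hx))
    rw [hlam]
    positivity
  have h1 : ∑ T ∈ A.powerset, ∑ x ∈ A \ T, lam T.card * (Δ (insert x T) - Δ T)
      = (∑ T ∈ A.powerset, ∑ x ∈ A \ T, lam T.card * Δ (insert x T))
        - ∑ T ∈ A.powerset, ∑ x ∈ A \ T, lam T.card * Δ T := by
    simp [mul_sub, Finset.sum_sub_distrib]
  have h2 : ∑ T ∈ A.powerset, ∑ x ∈ A \ T, lam T.card * Δ (insert x T)
      = ∑ U ∈ A.powerset, (U.card : ℝ) * (lam (U.card - 1) * Δ U) := by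
    rw [sum_pair_reindex A (fun T x => lam T.card * Δ (insert x T))]
    refine Finset.sum_congr rfl fun U hU => ?_
    have hcong : ∀ x ∈ U, lam ((U.erase x).card) * Δ (insert x (U.erase x))
        = lam (U.card - 1) * Δ U := by
      intro x hx
      rw [card_erase_of_mem hx, insert_erase hx]
    rw [Finset.sum_congr rfl hcong, Finset.sum_const, nsmul_eq_mul]
  have h3 : ∑ T ∈ A.powerset, ∑ x ∈ A \ T, lam T.card * Δ T
      = ∑ T ∈ A.powerset, ((n - T.card : ℕ) : ℝ) * (lam T.card * Δ T) := by
    refine Finset.sum_congr rfl fun T hT => ?_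
    rw [Finset.sum_const, card_sdiff_of_subset (mem_powerset.1 hT), nsmul_eq_mul]
  rw [h1, h2, h3, ← Finset.sum_sub_distrib] at h0
  refine h0.trans_eq (Finset.sum_congr rfl fun U hU => ?_)
  have hu : U.card ≤ n := card_le_card (mem_powerset.1 hU)
  have := coeff_eq n U.card hu
  calc (U.card : ℝ) * (lam (U.card - 1) * Δ U) - ((n - U.card : ℕ) : ℝ) * (lam U.card * Δ U)
      = ((U.card : ℝ) * lam (U.card - 1) - ((n - U.card : ℕ) : ℝ) * lam U.card) * Δ U := by ring
    _ = ((U.card.factorial : ℝ) * ((n - U.card).factorial : ℝ)) / ((n + 1).factorial : ℝ)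
        * (2 * U.card - (n : ℝ)) * Δ U := by rw [hlam]; rw [this]

private lemma gauss_sum_real (m : ℕ) : ∑ k ∈ Finset.range m, ((k : ℝ) + 1) = m * (m + 1) / 2 := by
  induction m with
  | zero => simp
  | succ m ih => rw [Finset.sum_range_succ, ih]; push_cast; ring

private lemma half_sum {ι : Type*} [DecidableEq ι] (A : Finset ι) :
    ∑ T ∈ A.powerset, ((T.card + 1).factorial : ℝ) * ((A.card - T.card).factorial : ℝ)
        / ((A.card + 2).factorial : ℝ) = 1 / 2 := by
  set n := A.card with hn
  rw [Finset.sum_powerset]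
  have hinner : ∀ j ∈ Finset.range (n + 1),
      ∑ T ∈ Finset.powersetCard j A,
        ((T.card + 1).factorial : ℝ) * ((n - T.card).factorial : ℝ) / ((n + 2).factorial : ℝ)
      = ((j : ℝ) + 1) * ((n.factorial : ℝ) / ((n + 2).factorial : ℝ)) := by
    intro j hj
    have hj' : j ≤ n := by
      have := Finset.mem_range.1 hj; omega
    have hcongr : ∀ T ∈ Finset.powersetCard j A,
        ((T.card + 1).factorial : ℝ) * ((n - T.card).factorial : ℝ) / ((n + 2).factorial : ℝ)
        = ((j + 1).factorial : ℝ) * ((n - j).factorial : ℝ) / ((n + 2).factorial : ℝ) := by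
      intro T hT
      rw [(Finset.mem_powersetCard.1 hT).2]
    rw [Finset.sum_congr rfl hcongr, Finset.sum_const, Finset.card_powersetCard, nsmul_eq_mul]
    have key : n.choose j * ((j + 1).factorial * (n - j).factorial) = (j + 1) * n.factorial := by
      rw [Nat.factorial_succ, ← Nat.choose_mul_factorial_mul_factorial hj']
      ring
    have keyR : (n.choose j : ℝ) * (((j + 1).factorial : ℝ) * ((n - j).factorial : ℝ))
        = ((j : ℝ) + 1) * (n.factorial : ℝ) := by
      exact_mod_cast congrArg (Nat.cast : ℕ → ℝ) key
    rw [← mul_div_assoc, ← mul_assoc, mul_assoc, keyR, mul_div_assoc]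
  rw [Finset.sum_congr rfl hinner, ← Finset.sum_mul, gauss_sum_real]
  have e2 : ((n + 2).factorial : ℝ) = ((n : ℝ) + 2) * ((n : ℝ) + 1) * (n.factorial : ℝ) := by
    rw [show n + 2 = (n + 1) + 1 from rfl, Nat.factorial_succ, Nat.factorial_succ]
    push_cast; ring
  rw [e2]
  have h0 : (0 : ℝ) < (n.factorial : ℝ) := by positivity
  field_simp
  push_cast; ring

private lemma coeff2 (n t : ℕ) (ht : t ≤ n) (x : ℝ) :
    1 / 2 * ((t.factorial : ℝ) * ((n - t).factorial : ℝ) / ((n + 1).factorial : ℝ) * x)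
      - (t.factorial : ℝ) * ((n + 1 - t).factorial : ℝ) / ((n + 2).factorial : ℝ) * x
    = 1 / (2 * ((n : ℝ) + 2)) *
        ((t.factorial : ℝ) * ((n - t).factorial : ℝ) / ((n + 1).factorial : ℝ)
          * (2 * t - (n : ℝ)) * x) := by
  obtain ⟨k, rfl⟩ : ∃ k, n = t + k := ⟨n - t, by omega⟩
  have h1 : t + k - t = k := by omega
  have h2 : t + k + 1 - t = k + 1 := by omega
  rw [h1, h2]
  have e1 : ((k + 1).factorial : ℝ) = ((k : ℝ) + 1) * (k.factorial : ℝ) := by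
    rw [Nat.factorial_succ]; push_cast; ring
  have e2 : ((t + k + 2).factorial : ℝ)
      = ((t : ℝ) + k + 2) * ((t + k + 1).factorial : ℝ) := by
    rw [show t + k + 2 = (t + k + 1) + 1 from rfl, Nat.factorial_succ]; push_cast; ring
  rw [e1, e2]
  have p1 : (0 : ℝ) < ((t + k + 1).factorial : ℝ) := by positivity
  field_simp
  push_cast; ring

/-- bound on the Shapley value after replication: for a supermodular
`v` on the replicated market `N^R = N ∪ {i'}`, with marginal contributions of `i`
to coalitions containing the replica `i'` bounded by `a_i`, the normalized Shapley
value of `i` after replication satisfies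
`φ^R(i) ≤ (φ(i)·v(N) + a_i) / (2·v(N^R))`. -/
theorem shapley_replication_bound {ι : Type*} [DecidableEq ι] (N : Finset ι)
    (M : ℕ) (hcard : N.card = M) (hM : 1 ≤ M)
    (i : ι) (hi : i ∈ N) (i' : ι) (hi' : i' ∉ N)
    (NR : Finset ι) (hNR : NR = insert i' N)
    (v : Finset ι → ℝ) (a_i : ℝ)
    (hsuper : ∀ R Q : Finset ι, R ⊆ Q → Q ⊆ NR → ∀ x ∈ NR \ Q,
      v (insert x R) - v R ≤ v (insert x Q) - v Q)
    (hvN : 0 < v N) (hvNR : 0 < v NR)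
    (hmarg : ∀ S ⊆ NR.erase i, i' ∈ S → v (insert i S) - v S ≤ a_i) :
    shapley NR v i ≤ (shapley N v i * v N + a_i) / (2 * v NR) := by
  have hii' : i ≠ i' := fun h => hi' (h ▸ hi)
  set A := N.erase i with hA
  have hiA : i ∉ A := notMem_erase _ _
  have hi'A : i' ∉ A := fun h => hi' (mem_of_mem_erase h)
  have hAN : A ⊆ N := erase_subset _ _
  have hNNR : N ⊆ NR := by rw [hNR]; exact subset_insert _ _
  set n := A.card with hn
  have hnN : N.card = n + 1 := by
    rw [hn, hA, card_erase_of_mem hi]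
    have : 1 ≤ N.card := hcard ▸ hM
    omega
  have hcardNR : NR.card = n + 2 := by
    rw [hNR, card_insert_of_notMem hi', hnN]
  have hNRe : NR.erase i = insert i' A := by
    rw [hNR, hA, erase_insert_of_ne hii'.symm]
  -- monotonicity of marginal contributions
  have hmono : ∀ T ∈ A.powerset, ∀ x ∈ A \ T,
      v (insert i T) - v T ≤ v (insert i (insert x T)) - v (insert x T) := by
    intro T hT x hx
    obtain ⟨hxA, hxT⟩ := mem_sdiff.1 hx
    have hTA : T ⊆ A := mem_powerset.1 hT
    have hxi : x ≠ i := ne_of_mem_erase hxA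
    refine hsuper T (insert x T) (subset_insert _ _)
      (insert_subset (hNNR (hAN hxA)) ((hTA.trans hAN).trans hNNR)) i ?_
    refine mem_sdiff.2 ⟨hNNR hi, ?_⟩
    simp only [mem_insert, not_or]
    exact ⟨fun h => hxi h.symm, fun hiT => hiA (hTA hiT)⟩
  -- upper bound on marginals of coalitions containing i'
  have hub : ∀ T ∈ A.powerset, v (insert i (insert i' T)) - v (insert i' T) ≤ a_i := by
    intro T hT
    refine hmarg (insert i' T) ?_ (mem_insert_self _ _)
    rw [hNRe]
    exact insert_subset_insert _ (mem_powerset.1 hT)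
  -- split of the replicated-market sum
  have hdisj : Disjoint A.powerset (A.powerset.image (insert i')) := by
    rw [Finset.disjoint_right]
    intro S hS hS'
    obtain ⟨T, _, rfl⟩ := Finset.mem_image.1 hS
    exact hi'A (mem_powerset.1 hS' (mem_insert_self _ _))
  have hinj : ∀ T ∈ A.powerset, ∀ T' ∈ A.powerset, insert i' T = insert i' T' → T = T' := by
    intro T hT T' hT' h
    have h1 : i' ∉ T := fun hh => hi'A (mem_powerset.1 hT hh)
    have h2 : i' ∉ T' := fun hh => hi'A (mem_powerset.1 hT' hh)
    rw [← erase_insert h1, ← erase_insert h2, h]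
  have hsplit :
      (∑ S ∈ (NR.erase i).powerset,
        (S.card.factorial * (NR.card - S.card - 1).factorial : ℝ)
          / (NR.card.factorial : ℝ) * (v (insert i S) - v S))
      = (∑ T ∈ A.powerset,
          (T.card.factorial : ℝ) * ((n + 1 - T.card).factorial : ℝ)
            / ((n + 2).factorial : ℝ) * (v (insert i T) - v T))
        + ∑ T ∈ A.powerset,
            ((T.card + 1).factorial : ℝ) * ((n - T.card).factorial : ℝ)
              / ((n + 2).factorial : ℝ) * (v (insert i (insert i' T)) - v (insert i' T)) := by
    rw [hNRe, powerset_insert, Finset.sum_union hdisj, Finset.sum_image hinj, hcardNR]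
    congr 1
    · refine Finset.sum_congr rfl fun T hT => ?_
      have h2 : n + 2 - T.card - 1 = n + 1 - T.card := by omega
      rw [h2]
    · refine Finset.sum_congr rfl fun T hT => ?_
      have h1 : i' ∉ T := fun hh => hi'A (mem_powerset.1 hT hh)
      have hc : (insert i' T).card = T.card + 1 := card_insert_of_notMem h1
      have h2 : n + 2 - (T.card + 1) - 1 = n - T.card := by omega
      rw [hc, h2]
  -- bound the part with i'
  have hp2 : (∑ T ∈ A.powerset,
      ((T.card + 1).factorial : ℝ) * ((n - T.card).factorial : ℝ)
        / ((n + 2).factorial : ℝ) * (v (insert i (insert i' T)) - v (insert i' T)))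
      ≤ 1 / 2 * a_i := by
    have hhalf := half_sum A
    rw [← hn] at hhalf
    calc (∑ T ∈ A.powerset,
        ((T.card + 1).factorial : ℝ) * ((n - T.card).factorial : ℝ)
          / ((n + 2).factorial : ℝ) * (v (insert i (insert i' T)) - v (insert i' T)))
        ≤ ∑ T ∈ A.powerset,
            ((T.card + 1).factorial : ℝ) * ((n - T.card).factorial : ℝ)
              / ((n + 2).factorial : ℝ) * a_i := by
          refine Finset.sum_le_sum fun T hT => ?_
          exact mul_le_mul_of_nonneg_left (hub T hT) (by positivity)
      _ = (∑ T ∈ A.powerset,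
            ((T.card + 1).factorial : ℝ) * ((n - T.card).factorial : ℝ)
              / ((n + 2).factorial : ℝ)) * a_i := by rw [← Finset.sum_mul]
      _ = 1 / 2 * a_i := by rw [hhalf]
  -- bound the part without i'
  set B : ℝ := ∑ T ∈ A.powerset,
      (T.card.factorial : ℝ) * ((n - T.card).factorial : ℝ) / ((n + 1).factorial : ℝ)
        * (v (insert i T) - v T) with hBdef
  have hp1 : (∑ T ∈ A.powerset,
      (T.card.factorial : ℝ) * ((n + 1 - T.card).factorial : ℝ)
        / ((n + 2).factorial : ℝ) * (v (insert i T) - v T)) ≤ 1 / 2 * B := by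
    have hkey : 0 ≤ ∑ T ∈ A.powerset,
        (T.card.factorial : ℝ) * ((n - T.card).factorial : ℝ) / ((n + 1).factorial : ℝ)
          * (2 * T.card - (n : ℝ)) * (v (insert i T) - v T) := by
      have := key_ineq A (fun S => v (insert i S) - v S) hmono
      rw [← hn] at this
      exact this
    have hdiff : 1 / 2 * B - (∑ T ∈ A.powerset,
        (T.card.factorial : ℝ) * ((n + 1 - T.card).factorial : ℝ)
          / ((n + 2).factorial : ℝ) * (v (insert i T) - v T))
        = 1 / (2 * ((n : ℝ) + 2)) * ∑ T ∈ A.powerset,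
            (T.card.factorial : ℝ) * ((n - T.card).factorial : ℝ) / ((n + 1).factorial : ℝ)
              * (2 * T.card - (n : ℝ)) * (v (insert i T) - v T) := by
      rw [hBdef, Finset.mul_sum, Finset.mul_sum, ← Finset.sum_sub_distrib]
      refine Finset.sum_congr rfl fun T hT => ?_
      exact coeff2 n T.card (card_le_card (mem_powerset.1 hT)) _
    nlinarith [mul_nonneg (by positivity : (0:ℝ) ≤ 1 / (2 * ((n : ℝ) + 2))) hkey]
  -- assemble
  have hSN : (∑ S ∈ A.powerset,
      (S.card.factorial * (N.card - S.card - 1).factorial : ℝ)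
        / (N.card.factorial : ℝ) * (v (insert i S) - v S)) = B := by
    rw [hBdef, hnN]
    refine Finset.sum_congr rfl fun T hT => ?_
    have h2 : n + 1 - T.card - 1 = n - T.card := by omega
    rw [h2]
  have hnum : (∑ S ∈ (NR.erase i).powerset,
      (S.card.factorial * (NR.card - S.card - 1).factorial : ℝ)
        / (NR.card.factorial : ℝ) * (v (insert i S) - v S)) ≤ (B + a_i) / 2 := by
    rw [hsplit]; linarith
  simp only [shapley, ← hA, hSN]
  have hvN' : v N ≠ 0 := ne_of_gt hvN
  have hvNR' : v NR ≠ 0 := ne_of_gt hvNR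
  have hBN : 1 / v N * B * v N = B := by field_simp
  rw [hBN]
  calc 1 / v NR * (∑ S ∈ (NR.erase i).powerset,
        (S.card.factorial * (NR.card - S.card - 1).factorial : ℝ)
          / (NR.card.factorial : ℝ) * (v (insert i S) - v S))
      ≤ 1 / v NR * ((B + a_i) / 2) := by
        exact mul_le_mul_of_nonneg_left hnum (by positivity)
    _ = (B + a_i) / (2 * v NR) := by
        rw [one_div, inv_mul_eq_div, div_div]
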